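/- Let n, r, s be integers with r ≥ 0, s ≥ 0 and r + s ≤ n. Let W ⊆ ℂ^{n+1} be a complex linear subspace such that every nonzero w = (w₀, …, w_n) ∈ W satisfies ∑_{i=0}^{r} |w_i|² > ∑_{j=r+1}^{r+s} |w_j|². Then the linear projection w ↦ (w₀, …, w_r) is injective on W; in particular dim_ℂ W ≤ r + 1. Moreover, if dim_ℂ W = r + 1, then there exist unique matrices A₁ ∈ M_{(r+1)×s}(ℂ) with I_{r+1} − A₁·A₁* positive definite and A₂ ∈ M_{(r+1)×(n−r−s)}(ℂ) such that W = {(z, z·A₁, z·A₂) : z ∈ ℂ^{r+1}}. -/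

import Mathlib

open Matrix
open scoped ComplexOrder

set_option maxHeartbeats 800000
set_option synthInstance.maxHeartbeats 400000

/-- The vector `(z, z·A₁, z·A₂) ∈ ℂ^{n+1}`, where `z ∈ ℂ^{r+1}`,
`A₁` is a complex `(r+1)×s` matrix and `A₂` is a complex `(r+1)×(n-r-s)` matrix. -/
noncomputable def genBallGraphVec (n r s : ℕ) (A₁ : Matrix (Fin (r + 1)) (Fin s) ℂ)
    (A₂ : Matrix (Fin (r + 1)) (Fin (n - r - s)) ℂ) (z : Fin (r + 1) → ℂ) :
    Fin (n + 1) → ℂ :=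
  fun i =>
    if h1 : (i : ℕ) ≤ r then z ⟨(i : ℕ), by omega⟩
    else if h2 : (i : ℕ) ≤ r + s then Matrix.vecMul z A₁ ⟨(i : ℕ) - (r + 1), by omega⟩
    else Matrix.vecMul z A₂ ⟨(i : ℕ) - (r + s + 1), by have := i.isLt; omega⟩

section Aux

variable {n r s : ℕ} {A₁ : Matrix (Fin (r + 1)) (Fin s) ℂ}
  {A₂ : Matrix (Fin (r + 1)) (Fin (n - r - s)) ℂ} {z : Fin (r + 1) → ℂ}

lemma gb_sum_head (hr : r ≤ n) (f : Fin (n + 1) → ℝ) :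
    (∑ i : Fin (n + 1), if (i : ℕ) ≤ r then f i else 0)
      = ∑ k : Fin (r + 1), f ⟨(k : ℕ), by omega⟩ := by
  rw [Finset.sum_ite, Finset.sum_const_zero, add_zero]
  refine Finset.sum_nbij' (fun i => (⟨min (i:ℕ) r, by omega⟩ : Fin (r+1)))
    (fun k => (⟨(k:ℕ), by omega⟩ : Fin (n+1))) ?_ ?_ ?_ ?_ ?_
  · intro a ha; simp
  · intro k _; simp; omega
  · intro a ha; simp at ha; ext; simp; omega
  · intro k _; ext; simp; omega
  · intro a ha; simp at ha; congr 1; ext; simp; omega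

lemma gb_sum_mid (hrsn : r + s ≤ n) (f : Fin (n + 1) → ℝ) :
    (∑ i : Fin (n + 1), if r < (i : ℕ) ∧ (i : ℕ) ≤ r + s then f i else 0)
      = ∑ j : Fin s, f ⟨r + 1 + (j : ℕ), by omega⟩ := by
  obtain rfl | hs := Nat.eq_zero_or_pos s
  · simp only [Finset.univ_eq_empty, Finset.sum_empty]
    refine Finset.sum_eq_zero fun i _ => ?_
    rw [if_neg]; omega
  rw [Finset.sum_ite, Finset.sum_const_zero, add_zero]
  refine Finset.sum_nbij' (fun i => (⟨min ((i:ℕ) - (r+1)) (s-1), by omega⟩ : Fin s))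
    (fun j => (⟨r + 1 + (j:ℕ), by omega⟩ : Fin (n+1))) ?_ ?_ ?_ ?_ ?_
  · intro a ha; simp
  · intro j _; simp; omega
  · intro a ha; simp at ha; have := a.isLt; ext; simp; omega
  · intro j _; have := j.isLt; ext; simp; omega
  · intro a ha; simp at ha; congr 1; ext; simp; omega

lemma gb_head (k : Fin (r + 1)) (h : (k : ℕ) < n + 1) :
    genBallGraphVec n r s A₁ A₂ z ⟨(k : ℕ), h⟩ = z k := by
  have hk : (k : ℕ) ≤ r := by omega
  simp only [genBallGraphVec, dif_pos hk]

lemma gb_mid (j : Fin s) (h : r + 1 + (j : ℕ) < n + 1) :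
    genBallGraphVec n r s A₁ A₂ z ⟨r + 1 + (j : ℕ), h⟩ = Matrix.vecMul z A₁ j := by
  have h1 : ¬ (r + 1 + (j : ℕ) ≤ r) := by omega
  have h2 : r + 1 + (j : ℕ) ≤ r + s := by have := j.isLt; omega
  simp only [genBallGraphVec, dif_neg h1, dif_pos h2]
  congr 1; ext; simp

lemma gb_tail (j : Fin (n - r - s)) (h : r + s + 1 + (j : ℕ) < n + 1) :
    genBallGraphVec n r s A₁ A₂ z ⟨r + s + 1 + (j : ℕ), h⟩ = Matrix.vecMul z A₂ j := by
  have h1 : ¬ (r + s + 1 + (j : ℕ) ≤ r) := by omega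
  have h2 : ¬ (r + s + 1 + (j : ℕ) ≤ r + s) := by omega
  simp only [genBallGraphVec, dif_neg h1, dif_neg h2]
  congr 1; ext; simp

lemma gb_S1 (hrsn : r + s ≤ n) :
    (∑ i : Fin (n + 1), if (i : ℕ) ≤ r then ‖genBallGraphVec n r s A₁ A₂ z i‖ ^ 2 else 0)
      = ∑ k : Fin (r + 1), ‖z k‖ ^ 2 := by
  rw [gb_sum_head (by omega)]
  exact Finset.sum_congr rfl fun k _ => by rw [gb_head]

lemma gb_S2 (hrsn : r + s ≤ n) :
    (∑ i : Fin (n + 1),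
        if r < (i : ℕ) ∧ (i : ℕ) ≤ r + s then ‖genBallGraphVec n r s A₁ A₂ z i‖ ^ 2 else 0)
      = ∑ j : Fin s, ‖Matrix.vecMul z A₁ j‖ ^ 2 := by
  rw [gb_sum_mid hrsn]
  exact Finset.sum_congr rfl fun j _ => by rw [gb_mid]

end Aux

/-- positive definiteness from the norm inequality -/
lemma gb_posdef {m s : ℕ} (A : Matrix (Fin m) (Fin s) ℂ)
    (h : ∀ z : Fin m → ℂ, z ≠ 0 →
      (∑ j : Fin s, ‖Matrix.vecMul z A j‖ ^ 2) < ∑ k : Fin m, ‖z k‖ ^ 2) :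
    ((1 : Matrix (Fin m) (Fin m) ℂ) - A * Aᴴ).PosDef := by
  rw [Matrix.posDef_iff_dotProduct_mulVec]
  constructor
  · exact Matrix.isHermitian_one.sub (Matrix.isHermitian_mul_conjTranspose_self A)
  · intro x hx
    have hzne : star x ≠ 0 := by simpa [star_eq_zero] using hx
    have hlt := h (star x) hzne
    have hcalc : dotProduct (star x)
          (((1 : Matrix (Fin m) (Fin m) ℂ) - A * Aᴴ) *ᵥ x)
        = (((∑ k : Fin m, ‖star x k‖ ^ 2)
            - ∑ j : Fin s, ‖Matrix.vecMul (star x) A j‖ ^ 2 : ℝ) : ℂ) := by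
      rw [Matrix.sub_mulVec, dotProduct_sub, Matrix.one_mulVec]
      have hterm1 : dotProduct (star x) x
          = (((∑ k : Fin m, ‖star x k‖ ^ 2 : ℝ)) : ℂ) := by
        simp only [dotProduct, Pi.star_apply]
        push_cast
        refine Finset.sum_congr rfl fun k _ => ?_
        rw [show ((‖star (x k)‖ : ℂ) ^ 2) = ((‖x k‖ : ℂ) ^ 2) by rw [norm_star]]
        rw [← Complex.mul_conj']
        ring_nf
        rw [mul_comm]
        rfl
      have hterm2 : dotProduct (star x) ((A * Aᴴ) *ᵥ x)
          = (((∑ j : Fin s, ‖Matrix.vecMul (star x) A j‖ ^ 2 : ℝ)) : ℂ) := by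
        rw [← Matrix.mulVec_mulVec, Matrix.dotProduct_mulVec]
        have hy : Matrix.vecMul (star x) A = star (Aᴴ *ᵥ x) := by
          rw [Matrix.star_mulVec, Matrix.conjTranspose_conjTranspose]
        rw [hy]
        simp only [dotProduct, Pi.star_apply]
        push_cast
        refine Finset.sum_congr rfl fun j _ => ?_
        rw [show ‖star ((Aᴴ *ᵥ x) j)‖ = ‖(Aᴴ *ᵥ x) j‖ from norm_star _]
        rw [← Complex.mul_conj']
        ring_nf
        rw [mul_comm]
        rfl
      rw [hterm1, hterm2]
      push_cast
      ring
    rw [hcalc]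
    exact Complex.zero_lt_real.mpr (by linarith)

section Key

variable {n r s : ℕ} {W : Submodule ℂ (Fin (n + 1) → ℂ)}

lemma gb_exp (e : W ≃ₗ[ℂ] (Fin (r + 1) → ℂ)) (z : Fin (r + 1) → ℂ) (i : Fin (n + 1)) :
    (e.symm z : Fin (n + 1) → ℂ) i
      = ∑ k : Fin (r + 1), z k * (e.symm (Pi.single k 1) : Fin (n + 1) → ℂ) i := by
  have hz : z = ∑ k : Fin (r + 1), z k • (Pi.single k 1 : Fin (r + 1) → ℂ) := by
    funext l
    simp [Pi.single_apply]
  have h2 : e.symm z = ∑ k : Fin (r + 1), z k • e.symm (Pi.single k 1) := by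
    conv_lhs => rw [hz]
    rw [map_sum]
    simp only [_root_.map_smul]
  rw [h2, Submodule.coe_sum]
  simp [Finset.sum_apply]

lemma gb_key (hrsn : r + s ≤ n) (e : W ≃ₗ[ℂ] (Fin (r + 1) → ℂ))
    (hhead : ∀ (x : W) (k : Fin (r + 1)) (h : (k : ℕ) < n + 1),
      (x : Fin (n + 1) → ℂ) ⟨(k : ℕ), h⟩ = e x k)
    (A₁ : Matrix (Fin (r + 1)) (Fin s) ℂ) (A₂ : Matrix (Fin (r + 1)) (Fin (n - r - s)) ℂ)
    (hA₁ : ∀ (k : Fin (r + 1)) (j : Fin s),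
      A₁ k j = (e.symm (Pi.single k 1) : Fin (n + 1) → ℂ)
        ⟨r + 1 + (j : ℕ), by have := j.isLt; omega⟩)
    (hA₂ : ∀ (k : Fin (r + 1)) (j : Fin (n - r - s)),
      A₂ k j = (e.symm (Pi.single k 1) : Fin (n + 1) → ℂ)
        ⟨r + s + 1 + (j : ℕ), by have := j.isLt; omega⟩)
    (z : Fin (r + 1) → ℂ) :
    (e.symm z : Fin (n + 1) → ℂ) = genBallGraphVec n r s A₁ A₂ z := by
  funext i
  by_cases h1 : (i : ℕ) ≤ r
  · have h1' : (i : ℕ) < r + 1 := by omega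
    have hi : i = ⟨((⟨(i : ℕ), h1'⟩ : Fin (r + 1)) : ℕ), by simpa using i.isLt⟩ := by ext; rfl
    rw [hi, hhead (e.symm z) ⟨(i : ℕ), h1'⟩, e.apply_symm_apply]
    simp only [genBallGraphVec]
    rw [dif_pos h1]
  · by_cases h2 : (i : ℕ) ≤ r + s
    · simp only [genBallGraphVec, dif_neg h1, dif_pos h2]
      rw [gb_exp]
      simp only [Matrix.vecMul, dotProduct]
      refine Finset.sum_congr rfl fun k _ => ?_
      rw [hA₁]
      have hi : (⟨r + 1 + ((⟨(i : ℕ) - (r + 1), by omega⟩ : Fin s) : ℕ), by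
          have := i.isLt; simp; omega⟩ : Fin (n + 1)) = i := by
        ext; simp; omega
      rw [hi]
    · simp only [genBallGraphVec, dif_neg h1, dif_neg h2]
      rw [gb_exp]
      simp only [Matrix.vecMul, dotProduct]
      refine Finset.sum_congr rfl fun k _ => ?_
      rw [hA₂]
      have hi : (⟨r + s + 1 + ((⟨(i : ℕ) - (r + s + 1), by have := i.isLt; omega⟩
            : Fin (n - r - s)) : ℕ), by have := i.isLt; simp; omega⟩ : Fin (n + 1)) = i := by
        ext; simp; omega
      rw [hi]

end Key

theorem stmt_13 (n r s : ℕ) (hrsn : r + s ≤ n)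
    (W : Submodule ℂ (Fin (n + 1) → ℂ))
    (hW : ∀ w ∈ W, w ≠ 0 →
      (∑ i : Fin (n + 1), if r < (i : ℕ) ∧ (i : ℕ) ≤ r + s then ‖w i‖ ^ 2 else 0) <
        ∑ i : Fin (n + 1), if (i : ℕ) ≤ r then ‖w i‖ ^ 2 else 0) :
    Set.InjOn
      (fun w : Fin (n + 1) → ℂ => fun i : Fin (r + 1) =>
        w ⟨(i : ℕ), by have := i.isLt; omega⟩) W ∧
    Module.finrank ℂ W ≤ r + 1 ∧
    (Module.finrank ℂ W = r + 1 →
      ∃! p : Matrix (Fin (r + 1)) (Fin s) ℂ × Matrix (Fin (r + 1)) (Fin (n - r - s)) ℂ,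
        ((1 : Matrix (Fin (r + 1)) (Fin (r + 1)) ℂ) - p.1 * p.1ᴴ).PosDef ∧
        (W : Set (Fin (n + 1) → ℂ)) =
          {w | ∃ z : Fin (r + 1) → ℂ, w = genBallGraphVec n r s p.1 p.2 z}) := by
  have hr : r ≤ n := by omega
  set π : (Fin (n + 1) → ℂ) →ₗ[ℂ] (Fin (r + 1) → ℂ) :=
    LinearMap.funLeft ℂ ℂ (fun k : Fin (r + 1) => (⟨(k : ℕ), by omega⟩ : Fin (n + 1))) with hπ
  have hzero : ∀ w ∈ W, π w = 0 → w = 0 := by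
    intro w hw h0
    by_contra hne
    have hlt := hW w hw hne
    have hS1 : (∑ i : Fin (n + 1), if (i : ℕ) ≤ r then ‖w i‖ ^ 2 else 0) = 0 := by
      rw [gb_sum_head hr]
      refine Finset.sum_eq_zero fun k _ => ?_
      have : w ⟨(k : ℕ), by omega⟩ = 0 := congrFun h0 k
      rw [this]; simp
    have hS2 : 0 ≤ ∑ i : Fin (n + 1),
        if r < (i : ℕ) ∧ (i : ℕ) ≤ r + s then ‖w i‖ ^ 2 else 0 :=
      Finset.sum_nonneg fun i _ => by positivity
    linarith
  have hinj : Set.InjOn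
      (fun w : Fin (n + 1) → ℂ => fun i : Fin (r + 1) =>
        w ⟨(i : ℕ), by have := i.isLt; omega⟩) W := by
    intro w hw w' hw' h
    have h0 : π (w - w') = 0 := by
      funext k
      have := congrFun h k
      simp only at this
      simp [hπ, LinearMap.funLeft, this]
    exact sub_eq_zero.mp (hzero _ (sub_mem hw hw') h0)
  have hπWinj : Function.Injective (π.comp W.subtype) := by
    intro a b hab
    have h0 : π ((a : Fin (n + 1) → ℂ) - b) = 0 := by
      rw [map_sub, sub_eq_zero]; exact hab
    exact Subtype.ext (sub_eq_zero.mp (hzero _ (sub_mem a.2 b.2) h0))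
  refine ⟨hinj, ?_, ?_⟩
  · calc Module.finrank ℂ W ≤ Module.finrank ℂ (Fin (r + 1) → ℂ) :=
        LinearMap.finrank_le_finrank_of_injective hπWinj
      _ = r + 1 := Module.finrank_fin_fun ℂ
  intro hdim
  have hπWsurj : Function.Surjective (π.comp W.subtype) := by
    refine (LinearMap.injective_iff_surjective_of_finrank_eq_finrank ?_).mp hπWinj
    rw [hdim, Module.finrank_fin_fun]
  obtain ⟨e, he⟩ : ∃ e : W ≃ₗ[ℂ] (Fin (r + 1) → ℂ), ∀ x : W, e x = π.comp W.subtype x :=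
    ⟨LinearEquiv.ofBijective (π.comp W.subtype) ⟨hπWinj, hπWsurj⟩, fun x => rfl⟩
  have hhead : ∀ (x : W) (k : Fin (r + 1)) (h : (k : ℕ) < n + 1),
      (x : Fin (n + 1) → ℂ) ⟨(k : ℕ), h⟩ = e x k := by
    intro x k h
    rw [he x]
    rfl
  set A₁ : Matrix (Fin (r + 1)) (Fin s) ℂ := fun k j =>
    (e.symm (Pi.single k 1) : Fin (n + 1) → ℂ) ⟨r + 1 + (j : ℕ), by have := j.isLt; omega⟩
    with hA₁def
  set A₂ : Matrix (Fin (r + 1)) (Fin (n - r - s)) ℂ := fun k j =>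
    (e.symm (Pi.single k 1) : Fin (n + 1) → ℂ) ⟨r + s + 1 + (j : ℕ), by have := j.isLt; omega⟩
    with hA₂def
  have hkey := gb_key hrsn e hhead A₁ A₂ (fun k j => rfl) (fun k j => rfl)
  have hmem : ∀ z : Fin (r + 1) → ℂ, genBallGraphVec n r s A₁ A₂ z ∈ W := by
    intro z
    rw [← hkey z]; exact (e.symm z).2
  have hWset : (W : Set (Fin (n + 1) → ℂ))
      = {w | ∃ z : Fin (r + 1) → ℂ, w = genBallGraphVec n r s A₁ A₂ z} := by
    ext w
    constructor
    · intro hw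
      refine ⟨e ⟨w, hw⟩, ?_⟩
      have := hkey (e ⟨w, hw⟩)
      rwa [e.symm_apply_apply] at this
    · rintro ⟨z, rfl⟩
      exact hmem z
  have hpd : ((1 : Matrix (Fin (r + 1)) (Fin (r + 1)) ℂ) - A₁ * A₁ᴴ).PosDef := by
    refine gb_posdef A₁ fun z hz => ?_
    have hwne : genBallGraphVec n r s A₁ A₂ z ≠ 0 := by
      intro h0
      apply hz
      funext k
      have hk := gb_head (A₁ := A₁) (A₂ := A₂) (z := z) k (by have := k.isLt; omega)
      rw [← hk, congrFun h0 _]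
      rfl
    have hlt := hW _ (hmem z) hwne
    rwa [gb_S1 hrsn, gb_S2 hrsn] at hlt
  refine ⟨(A₁, A₂), ⟨hpd, hWset⟩, ?_⟩
  rintro ⟨B₁, B₂⟩ ⟨-, hBset⟩
  have hsets : {w | ∃ z : Fin (r + 1) → ℂ, w = genBallGraphVec n r s B₁ B₂ z}
      = {w | ∃ z : Fin (r + 1) → ℂ, w = genBallGraphVec n r s A₁ A₂ z} := by
    rw [← hBset, hWset]
  have hrow : ∀ k : Fin (r + 1),
      genBallGraphVec n r s B₁ B₂ (Pi.single k 1)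
        = genBallGraphVec n r s A₁ A₂ (Pi.single k 1) := by
    intro k
    obtain ⟨z, hz⟩ : ∃ z, genBallGraphVec n r s B₁ B₂ (Pi.single k 1)
        = genBallGraphVec n r s A₁ A₂ z := by
      have : genBallGraphVec n r s B₁ B₂ (Pi.single k 1) ∈
          {w | ∃ z : Fin (r + 1) → ℂ, w = genBallGraphVec n r s B₁ B₂ z} := ⟨_, rfl⟩
      rw [hsets] at this
      exact this
    have hzeq : z = Pi.single k 1 := by
      funext l
      have h1 := congrFun hz ⟨(l : ℕ), by have := l.isLt; omega⟩
      rw [gb_head, gb_head] at h1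
      exact h1.symm
    rw [hz, hzeq]
  have hB₁ : B₁ = A₁ := by
    ext k j
    have h1 := congrFun (hrow k) ⟨r + 1 + (j : ℕ), by have := j.isLt; omega⟩
    rw [gb_mid, gb_mid] at h1
    simpa [Matrix.single_vecMul] using h1
  have hB₂ : B₂ = A₂ := by
    ext k j
    have h1 := congrFun (hrow k) ⟨r + s + 1 + (j : ℕ), by have := j.isLt; omega⟩
    rw [gb_tail, gb_tail] at h1
    simpa [Matrix.single_vecMul] using h1
  simp [hB₁, hB₂]
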